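/- Let V : ℝ → ℝ be continuous, let x_a, x_b ∈ ℝ satisfy V(x_a) ≤ V(x_b), and define W(x,y) = min{V(x), V(y)}. Then there exists a continuous path γ : [0,1] → ℝ² with γ(0) = (x_a, x_a), γ(1) = (x_b, x_b), and W(γ(t)) ≤ W(x_b, x_b) = V(x_b) for all t ∈ [0,1]. In particular it is possible to travel from (x_a, x_a) to (x_b, x_b) along a path on which W never exceeds W(x_b, x_b). -/
import Mathlib


/-- for continuous `V : ℝ → ℝ` with `V(x_a) ≤ V(x_b)` and
`W(x,y) = min(V(x), V(y))`, there is a continuous path `γ : [0,1] → ℝ²` from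
`(x_a, x_a)` to `(x_b, x_b)` along which `W` never exceeds `W(x_b, x_b) = V(x_b)`. -/
theorem stmt12 (V : ℝ → ℝ) (hV : Continuous V) (xa xb : ℝ) (hab : V xa ≤ V xb) :
    ∃ γ : ℝ → ℝ × ℝ, ContinuousOn γ (Set.Icc 0 1) ∧ γ 0 = (xa, xa) ∧ γ 1 = (xb, xb) ∧
      (∀ t ∈ Set.Icc (0 : ℝ) 1, min (V (γ t).1) (V (γ t).2) ≤ min (V xb) (V xb)) ∧
      min (V xb) (V xb) = V xb := by
  refine ⟨fun t => (xa + max 0 (2*t - 1) * (xb - xa), xa + min 1 (2*t) * (xb - xa)),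
    ?_, by norm_num, by norm_num, ?_, min_self _⟩
  · exact Continuous.continuousOn (by fun_prop)
  · intro t _
    rcases le_total t (1/2) with h | h
    · have h1 : max 0 (2*t - 1) = 0 := max_eq_left (by linarith)
      simp [h1, min_le_iff]
      left; exact hab
    · have h1 : min 1 (2*t) = 1 := min_eq_left (by linarith)
      simp [h1, min_le_iff]
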